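/- Let V be a module over a commutative monoid M acting by linear endomorphisms on a complex vector space, decomposed as V = ⊕_{χ∈S} V_χ into nonzero generalized eigenspace summands indexed by distinct characters χ of a central subgroup H acting on each V_χ with generalized character χ, each V_χ stable under M. If v ∈ V generates V as an M-module, then for every χ ∈ S the component of v in V_χ is nonzero. -/

import Mathlib

/-- If v generates V as an M-module and V decomposes as a direct sum of nonzero
M-stable generalized-eigenspace summands for a commuting family H, then the
component of v in each summand is nonzero. -/
theorem stmt15 (V : Type*) [AddCommGroup V] [Module ℂ V]
    (M : Type*) [Monoid M] (ρ : M →* Module.End ℂ V)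
    (H : Type*) [DecidableEq (H → ℂ)] (act : H → Module.End ℂ V)
    (hcomm : ∀ (h : H) (m : M), Commute (act h) (ρ m))
    (S : Finset (H → ℂ)) (Vχ : (H → ℂ) → Submodule ℂ V)
    (hne : ∀ χ ∈ S, Vχ χ ≠ ⊥)
    (hgen : ∀ χ ∈ S, ∀ w ∈ Vχ χ, ∀ h : H,
      ∃ n : ℕ, ((act h - algebraMap ℂ (Module.End ℂ V) (χ h)) ^ n) w = 0)
    (hstable : ∀ χ ∈ S, ∀ m : M, ∀ w ∈ Vχ χ, ρ m w ∈ Vχ χ)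
    (hinternal : DirectSum.IsInternal (fun χ : {χ // χ ∈ S} => Vχ χ.1))
    (v : V)
    (hv : Submodule.span ℂ {w | ∃ m : M, w = ρ m v} = ⊤) :
    ∀ χ ∈ S, v ∉ ⨆ χ' ∈ S.erase χ, Vχ χ' := by
  intro χ hχ hvW
  set W : Submodule ℂ V := ⨆ χ' ∈ S.erase χ, Vχ χ' with hW
  -- W is stable under every ρ m
  have hmap : ∀ m : M, Submodule.map (ρ m) W ≤ W := by
    intro m
    rw [hW, Submodule.map_iSup]
    refine iSup_mono fun χ' => ?_
    rw [Submodule.map_iSup]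
    refine iSup_mono fun hχ' => ?_
    rintro _ ⟨u, hu, rfl⟩
    exact hstable χ' (Finset.mem_of_mem_erase hχ') m u hu
  -- hence the span of the orbit of v is contained in W, so W = ⊤
  have hWtop : W = ⊤ := by
    refine top_le_iff.mp ?_
    rw [← hv]
    refine Submodule.span_le.mpr ?_
    rintro _ ⟨m, rfl⟩
    exact hmap m ⟨v, hvW, rfl⟩
  -- independence gives disjointness of Vχ χ from W
  have hdisj := hinternal.submodule_iSupIndep ⟨χ, hχ⟩
  have hle : W ≤ ⨆ (j : {χ // χ ∈ S}) (_ : j ≠ (⟨χ, hχ⟩ : {χ // χ ∈ S})), Vχ j.1 := by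
    rw [hW]
    refine iSup₂_le fun χ' hχ' => ?_
    have h1 : χ' ∈ S := Finset.mem_of_mem_erase hχ'
    have h2 : χ' ≠ χ := Finset.ne_of_mem_erase hχ'
    exact le_iSup₂ (f := fun (j : {χ // χ ∈ S}) (_ : j ≠ ⟨χ, hχ⟩) => Vχ j.1)
      ⟨χ', h1⟩ (by simpa [Subtype.ext_iff] using h2)
  have hdisj' : Disjoint (Vχ χ) W := hdisj.mono_right hle
  have : Vχ χ = ⊥ := hdisj'.eq_bot_of_le (hWtop ▸ le_top)
  exact hne χ hχ this
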